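/- arXiv:1905.00555 — 2 statements merged into one kernel-verified Lean document; each statement's English description precedes it below -/
import Mathlib

section
/- (Region II behaviour.) Fix y ∈ ℝ and let x₁ < x₂ with x₂ ≤ y − Δμ − ΔGc (so that both points lie in the closure of Region II). Then R(x₂, y) < R(x₁, y); if moreover S·e^(Δμ) > P, then Ψ(x₂, y) > Ψ(x₁, y). That is, within Region II, increasing the substrate binding free energy ΔG_ES strictly decreases the sequestered fraction and strictly increases the flux. -/
open Real Filter

/-- A probability vector `(pE, pES, pEP)` is a stationary distribution of the
three-state cycle chain with rates `a,b,c,d,f,g` if its entries are nonnegative,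
sum to 1, and satisfy the global balance equations. -/
def IsStat (a b c d f g pE pES pEP : ℝ) : Prop :=
  0 ≤ pE ∧ 0 ≤ pES ∧ 0 ≤ pEP ∧ pE + pES + pEP = 1 ∧
  (a + g) * pE = b * pES + f * pEP ∧
  (b + c) * pES = a * pE + d * pEP ∧
  (d + f) * pEP = c * pES + g * pE

/-- Monotonicity of `e ↦ N·e/(C1 + e·C3)`. -/
lemma frac_inc (N C1 C3 e1 e2 : ℝ) (hN : 0 < N) (hC1 : 0 < C1) (hC3 : 0 ≤ C3)
    (he1 : 0 < e1) (he : e1 < e2) :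
    N * e1 / (C1 + e1 * C3) < N * e2 / (C1 + e2 * C3) := by
  have he2 : 0 < e2 := he1.trans he
  have hd1 : 0 < C1 + e1 * C3 := add_pos_of_pos_of_nonneg hC1 (mul_nonneg he1.le hC3)
  have hd2 : 0 < C1 + e2 * C3 := add_pos_of_pos_of_nonneg hC1 (mul_nonneg he2.le hC3)
  rw [div_lt_div_iff₀ hd1 hd2]
  nlinarith [mul_pos (mul_pos hN hC1) (sub_pos.mpr he)]

/-- Solving the stationary equations of the 3-cycle (matrix-tree formulas). -/
lemma stat_solve (a b c d f g pE pES pEP : ℝ)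
    (ha : 0 < a) (hb : 0 < b) (hc : 0 < c) (hd : 0 < d) (hf : 0 < f) (hg : 0 < g)
    (h : IsStat a b c d f g pE pES pEP) :
    pE = (b*d + b*f + c*f) /
      (b*d + b*f + c*f + (a*d + a*f + d*g) + (a*c + g*b + g*c)) ∧
    pES = (a*d + a*f + d*g) /
      (b*d + b*f + c*f + (a*d + a*f + d*g) + (a*c + g*b + g*c)) := by
  obtain ⟨-, -, -, hsum, h1, h2, h3⟩ := h
  have hwE : (0:ℝ) < b*d + b*f + c*f := by positivity
  have hW : (0:ℝ) < b*d + b*f + c*f + (a*d + a*f + d*g) + (a*c + g*b + g*c) := by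
    positivity
  have hE2 : (b*d + b*f + c*f) * pES = (a*d + a*f + d*g) * pE := by
    linear_combination (d+f) * h2 + d * h3
  have hE3 : (b*d + b*f + c*f) * pEP = (a*c + g*b + g*c) * pE := by
    linear_combination c * h2 + (b+c) * h3
  have hpE : (b*d + b*f + c*f + (a*d + a*f + d*g) + (a*c + g*b + g*c)) * pE
      = b*d + b*f + c*f := by
    linear_combination (b*d + b*f + c*f) * hsum - hE2 - hE3
  have hpES : (b*d + b*f + c*f) *
      ((b*d + b*f + c*f + (a*d + a*f + d*g) + (a*c + g*b + g*c)) * pES)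
      = (b*d + b*f + c*f) * (a*d + a*f + d*g) := by
    linear_combination
      (b*d + b*f + c*f + (a*d + a*f + d*g) + (a*c + g*b + g*c)) * hE2
        + (a*d + a*f + d*g) * hpE
  have hpES' := mul_left_cancel₀ hwE.ne' hpES
  exact ⟨(eq_div_iff hW.ne').mpr (by linear_combination hpE),
    (eq_div_iff hW.ne').mpr (by linear_combination hpES')⟩

/-- Region II behaviour: for fixed `y`, increasing the substrate binding free
energy within (the closure of) Region II strictly decreases the sequestered
fraction and, when `S·e^Δμ > P`, strictly increases the flux. -/
theorem stmt_7
    (k0 k1 kcat S P dmu dGc : ℝ)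
    (hk0 : 0 < k0) (hk1 : 0 < k1) (hkcat : 0 < kcat) (hS : 0 < S) (hP : 0 < P)
    (pE pES pEP R Psi : ℝ → ℝ → ℝ)
    (hstat : ∀ x y : ℝ,
      IsStat (k0 * S) (k0 * exp x)
        (kcat * min 1 (exp (x - y + dmu + dGc)))
        (kcat * exp dGc * min 1 (exp (y - x - dmu - dGc)))
        (k1 * exp y) (k1 * P)
        (pE x y) (pES x y) (pEP x y))
    (hR : ∀ x y : ℝ, R x y = pES x y + pEP x y)
    (hPsi : ∀ x y : ℝ, Psi x y = k0 * S * pE x y - k0 * exp x * pES x y)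
    (y x₁ x₂ : ℝ) (hx : x₁ < x₂) (hreg : x₂ ≤ y - dmu - dGc) :
    R x₂ y < R x₁ y ∧ (S * exp dmu > P → Psi x₂ y > Psi x₁ y) := by
  -- abbreviations
  have hQE : exp (dmu + dGc - y) * exp y = exp dmu * exp dGc := by
    rw [← exp_add, ← exp_add]; congr 1; ring
  have hNE : (0:ℝ) < k0*(kcat*exp dGc) + k0*(k1*exp y)
      + kcat*exp (dmu+dGc-y)*(k1*exp y) := by positivity
  have hC1 : (0:ℝ) < k0*S*(kcat*exp dGc) + k0*S*(k1*exp y)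
      + kcat*exp dGc*(k1*P) := by positivity
  have hC3 : (0:ℝ) ≤ (k0*(kcat*exp dGc) + k0*(k1*exp y)
        + kcat*exp (dmu+dGc-y)*(k1*exp y))
      + (k0*S*(kcat*exp (dmu+dGc-y)) + k1*P*k0 + k1*P*(kcat*exp (dmu+dGc-y))) := by
    positivity
  -- per-point formulas
  have key : ∀ x : ℝ, x ≤ y - dmu - dGc →
      pE x y = (k0*(kcat*exp dGc) + k0*(k1*exp y)
          + kcat*exp (dmu+dGc-y)*(k1*exp y)) * exp x /
        ((k0*S*(kcat*exp dGc) + k0*S*(k1*exp y) + kcat*exp dGc*(k1*P))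
          + exp x * ((k0*(kcat*exp dGc) + k0*(k1*exp y)
              + kcat*exp (dmu+dGc-y)*(k1*exp y))
            + (k0*S*(kcat*exp (dmu+dGc-y)) + k1*P*k0
              + k1*P*(kcat*exp (dmu+dGc-y))))) ∧
      pES x y = (k0*S*(kcat*exp dGc) + k0*S*(k1*exp y) + kcat*exp dGc*(k1*P)) /
        ((k0*S*(kcat*exp dGc) + k0*S*(k1*exp y) + kcat*exp dGc*(k1*P))
          + exp x * ((k0*(kcat*exp dGc) + k0*(k1*exp y)
              + kcat*exp (dmu+dGc-y)*(k1*exp y))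
            + (k0*S*(kcat*exp (dmu+dGc-y)) + k1*P*k0
              + k1*P*(kcat*exp (dmu+dGc-y))))) := by
    intro x hxle
    have hst := hstat x y
    have hm1 : min 1 (exp (x - y + dmu + dGc)) = exp (x - y + dmu + dGc) :=
      min_eq_right (exp_le_one_iff.mpr (by linarith))
    have hm2 : min 1 (exp (y - x - dmu - dGc)) = 1 :=
      min_eq_left (one_le_exp (by linarith))
    rw [hm1, hm2, mul_one] at hst
    have hce : exp (x - y + dmu + dGc) = exp x * exp (dmu + dGc - y) := by
      rw [← exp_add]; congr 1; ring
    obtain ⟨h1, h2⟩ := stat_solve _ _ _ _ _ _ _ _ _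
      (by positivity) (by positivity) (by positivity) (by positivity)
      (by positivity) (by positivity) hst
    constructor
    · rw [h1]; rw [hce]; congr 1 <;> ring
    · rw [h2]; rw [hce]; congr 1 <;> ring
  obtain ⟨hpE1, hpES1⟩ := key x₁ (le_of_lt (lt_of_lt_of_le hx hreg))
  obtain ⟨hpE2, hpES2⟩ := key x₂ hreg
  have hsum1 := (hstat x₁ y).2.2.2.1
  have hsum2 := (hstat x₂ y).2.2.2.1
  have hexp : exp x₁ < exp x₂ := exp_lt_exp.mpr hx
  constructor
  · -- R = 1 - pE, and pE is strictly increasing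
    have hmono : pE x₁ y < pE x₂ y := by
      rw [hpE1, hpE2]
      exact frac_inc _ _ _ _ _ hNE hC1 hC3 (exp_pos _) hexp
    have e1 : R x₁ y = 1 - pE x₁ y := by rw [hR]; linarith
    have e2 : R x₂ y = 1 - pE x₂ y := by rw [hR]; linarith
    rw [e1, e2]; linarith
  · intro hSP
    have hNpsi : (0:ℝ) < k0*k1*kcat*exp dGc*(S*exp dmu - P) := by
      have : (0:ℝ) < S*exp dmu - P := by linarith
      positivity
    have hPsi1 : Psi x₁ y = (k0*k1*kcat*exp dGc*(S*exp dmu - P)) * exp x₁ /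
        ((k0*S*(kcat*exp dGc) + k0*S*(k1*exp y) + kcat*exp dGc*(k1*P))
          + exp x₁ * ((k0*(kcat*exp dGc) + k0*(k1*exp y)
              + kcat*exp (dmu+dGc-y)*(k1*exp y))
            + (k0*S*(kcat*exp (dmu+dGc-y)) + k1*P*k0
              + k1*P*(kcat*exp (dmu+dGc-y))))) := by
      rw [hPsi, hpE1, hpES1, ← mul_div_assoc, ← mul_div_assoc, div_sub_div_same]
      congr 1
      linear_combination (k0*k1*kcat*S*exp x₁) * hQE
    have hPsi2 : Psi x₂ y = (k0*k1*kcat*exp dGc*(S*exp dmu - P)) * exp x₂ /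
        ((k0*S*(kcat*exp dGc) + k0*S*(k1*exp y) + kcat*exp dGc*(k1*P))
          + exp x₂ * ((k0*(kcat*exp dGc) + k0*(k1*exp y)
              + kcat*exp (dmu+dGc-y)*(k1*exp y))
            + (k0*S*(kcat*exp (dmu+dGc-y)) + k1*P*k0
              + k1*P*(kcat*exp (dmu+dGc-y))))) := by
      rw [hPsi, hpE2, hpES2, ← mul_div_assoc, ← mul_div_assoc, div_sub_div_same]
      congr 1
      linear_combination (k0*k1*kcat*S*exp x₂) * hQE
    rw [hPsi1, hPsi2]
    exact frac_inc _ _ _ _ _ hNpsi hC1 hC3 (exp_pos _) hexp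
end

section
/- (The flux constraint is saturated, non-diffusion model.) Suppose Ψ₀ > 0 and the feasible set F = {(x,y) ∈ ℝ² : Ψ(x,y) ≥ Ψ₀} is nonempty. If (x*, y*) ∈ F minimizes R over F, then Ψ(x*, y*) = Ψ₀. -/
open Real Filter

lemma min_exp_neg' (u : ℝ) : min 1 (exp (-u)) = exp (-(max u 0)) := by
  rcases le_total u 0 with h | h
  · rw [max_eq_right h, neg_zero, exp_zero, min_eq_left]
    exact one_le_exp_iff.2 (by linarith)
  · rw [max_eq_left h, min_eq_right]
    exact exp_le_one_iff.2 (by linarith)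

lemma min_exp' (u : ℝ) : min 1 (exp u) = exp (u - max u 0) := by
  rcases le_total u 0 with h | h
  · rw [max_eq_right h, sub_zero, min_eq_right (exp_le_one_iff.2 h)]
  · rw [max_eq_left h, sub_self, exp_zero, min_eq_left (one_le_exp_iff.2 h)]

lemma stat_sol (a b c d f g pE pES pEP : ℝ)
    (ha : 0 < a) (hb : 0 < b) (hc : 0 < c) (hd : 0 < d) (hf : 0 < f) (hg : 0 < g)
    (hsum : pE + pES + pEP = 1)
    (h2 : (b + c) * pES = a * pE + d * pEP)
    (h3 : (d + f) * pEP = c * pES + g * pE) :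
    pE = (b*d+b*f+c*f) / (b*d+b*f+c*f + (a*d+a*f+d*g) + (a*c+c*g+b*g)) ∧
    pES = (a*d+a*f+d*g) / (b*d+b*f+c*f + (a*d+a*f+d*g) + (a*c+c*g+b*g)) ∧
    pEP = (a*c+c*g+b*g) / (b*d+b*f+c*f + (a*d+a*f+d*g) + (a*c+c*g+b*g)) := by
  have hSig : 0 < b*d+b*f+c*f + (a*d+a*f+d*g) + (a*c+c*g+b*g) := by positivity
  have hA : (b*d+b*f+c*f) * pES = (a*d+a*f+d*g) * pE := by
    linear_combination (d+f)*h2 + d*h3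
  have hB : (b*d+b*f+c*f) * pEP = (a*c+c*g+b*g) * pE := by
    linear_combination c*h2 + (b+c)*h3
  have hTE : 0 < b*d+b*f+c*f := by positivity
  have hpE : (b*d+b*f+c*f + (a*d+a*f+d*g) + (a*c+c*g+b*g)) * pE = (b*d+b*f+c*f) := by
    linear_combination (b*d+b*f+c*f)*hsum - hA - hB
  refine ⟨?_, ?_, ?_⟩
  · rw [eq_div_iff hSig.ne']
    linear_combination hpE
  · rw [eq_div_iff hSig.ne']
    apply mul_left_cancel₀ hTE.ne'
    linear_combination (b*d+b*f+c*f + (a*d+a*f+d*g) + (a*c+c*g+b*g))*hA + (a*d+a*f+d*g)*hpE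
  · rw [eq_div_iff hSig.ne']
    apply mul_left_cancel₀ hTE.ne'
    linear_combination (b*d+b*f+c*f + (a*d+a*f+d*g) + (a*c+c*g+b*g))*hB + (a*c+c*g+b*g)*hpE

lemma key_ineq (a b c d f g r m E : ℝ)
    (ha : 0 < a) (hb : 0 < b) (hc : 0 < c) (hd : 0 < d) (hf : 0 < f) (hg : 0 < g)
    (hE : 1 < E) (hr1 : r ≤ 1) (hm1 : m ≤ 1) (hrE : 1 ≤ r * E) (hmE : 1 ≤ m * E) :
    (a*r*d + a*r*(f*(m*E)) + d*(g*m) + a*r*c + c*(g*m) + b*(r*E)*(g*m)) * (b*d + b*f + c*f)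
      < (a*d + a*f + d*g + a*c + c*g + b*g) * (b*(r*E)*d + b*(r*E)*(f*(m*E)) + c*(f*(m*E))) := by
  have hE0 : 0 < E := by linarith
  have hr0 : 0 < r := by nlinarith
  have hm0 : 0 < m := by nlinarith
  have hK : 0 < r*m*E := by positivity
  have h1 : a*r*d + a*r*(f*(m*E)) + d*(g*m) + a*r*c + c*(g*m) + b*(r*E)*(g*m)
      ≤ (r*m*E) * (a*d + a*f + d*g + a*c + c*g + b*g) := by
    nlinarith [mul_nonneg (mul_nonneg (mul_nonneg ha.le hd.le) hr0.le) (sub_nonneg.2 hmE),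
      mul_nonneg (mul_nonneg (mul_nonneg hd.le hg.le) hm0.le) (sub_nonneg.2 hrE),
      mul_nonneg (mul_nonneg (mul_nonneg ha.le hc.le) hr0.le) (sub_nonneg.2 hmE),
      mul_nonneg (mul_nonneg (mul_nonneg hc.le hg.le) hm0.le) (sub_nonneg.2 hrE)]
  have h2 : (r*m*E) * (b*d + b*f + c*f) < b*(r*E)*d + b*(r*E)*(f*(m*E)) + c*(f*(m*E)) := by
    nlinarith [mul_nonneg (mul_nonneg (mul_nonneg (mul_nonneg hb.le hd.le) hr0.le) hE0.le) (sub_nonneg.2 hm1),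
      mul_pos (mul_pos (mul_pos (mul_pos (mul_pos hb hf) hr0) hm0) hE0) (sub_pos.2 hE),
      mul_nonneg (mul_nonneg (mul_nonneg (mul_nonneg hc.le hf.le) hm0.le) hE0.le) (sub_nonneg.2 hr1)]
  have hT0 : 0 < a*d + a*f + d*g + a*c + c*g + b*g := by positivity
  calc (a*r*d + a*r*(f*(m*E)) + d*(g*m) + a*r*c + c*(g*m) + b*(r*E)*(g*m)) * (b*d + b*f + c*f)
      ≤ ((r*m*E) * (a*d + a*f + d*g + a*c + c*g + b*g)) * (b*d + b*f + c*f) := by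
        apply mul_le_mul_of_nonneg_right h1 (by positivity)
    _ = (a*d + a*f + d*g + a*c + c*g + b*g) * ((r*m*E) * (b*d + b*f + c*f)) := by ring
    _ < (a*d + a*f + d*g + a*c + c*g + b*g) * (b*(r*E)*d + b*(r*E)*(f*(m*E)) + c*(f*(m*E))) :=
        by exact mul_lt_mul_of_pos_left h2 hT0

lemma key_ineq2 (a b c d f g r m E : ℝ)
    (ha : 0 < a) (hb : 0 < b) (hc : 0 < c) (hd : 0 < d) (hf : 0 < f) (hg : 0 < g)
    (hE : 1 < E) (hr1 : r ≤ 1) (hm1 : m ≤ 1) (hrE : 1 ≤ r * E) (hmE : 1 ≤ m * E) :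
    (((a * r)*d+(a * r)*(f * (m * E))+d*(g * m)) + ((a * r)*c+c*(g * m)+(b * (r * E))*(g * m))) * (b*d+b*f+c*f + (a*d+a*f+d*g) + (a*c+c*g+b*g))
      < ((a*d+a*f+d*g) + (a*c+c*g+b*g)) * ((b * (r * E))*d+(b * (r * E))*(f * (m * E))+c*(f * (m * E)) + ((a * r)*d+(a * r)*(f * (m * E))+d*(g * m)) + ((a * r)*c+c*(g * m)+(b * (r * E))*(g * m))) := by
  have hkey := key_ineq a b c d f g r m E ha hb hc hd hf hg hE hr1 hm1 hrE hmE
  nlinarith [hkey]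


set_option maxHeartbeats 1000000 in
/-- Non-diffusion model: the flux constraint is saturated. Any minimizer of the
sequestered fraction over the nonempty feasible set `{Ψ ≥ Ψ₀}` satisfies
`Ψ(x*,y*) = Ψ₀`. -/
theorem stmt_19
    (k0 k1 kcat S P dmu dGc E1 E2 : ℝ)
    (hk0 : 0 < k0) (hk1 : 0 < k1) (hkcat : 0 < kcat) (hS : 0 < S) (hP : 0 < P)
    (pE pES pEP R Psi : ℝ → ℝ → ℝ)
    (hstat : ∀ x y : ℝ,
      IsStat (k0 * S * min 1 (exp (-(x - E1)))) (k0 * exp E1 * min 1 (exp (x - E1)))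
        (kcat * min 1 (exp (x - y + dmu + dGc)))
        (kcat * exp dGc * min 1 (exp (y - x - dmu - dGc)))
        (k1 * exp E2 * min 1 (exp (y - E2))) (k1 * P * min 1 (exp (-(y - E2))))
        (pE x y) (pES x y) (pEP x y))
    (hR : ∀ x y : ℝ, R x y = pES x y + pEP x y)
    (hPsi : ∀ x y : ℝ, Psi x y =
      k0 * S * min 1 (exp (-(x - E1))) * pE x y -
        k0 * exp E1 * min 1 (exp (x - E1)) * pES x y)
    (Psi0 : ℝ) (hPsi0 : 0 < Psi0)
    (hne : ∃ q : ℝ × ℝ, Psi0 ≤ Psi q.1 q.2)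
    (xs ys : ℝ)
    (hfeas : Psi0 ≤ Psi xs ys)
    (hmin : ∀ x y : ℝ, Psi0 ≤ Psi x y → R xs ys ≤ R x y) :
    Psi xs ys = Psi0 := by
  by_contra hne2
  have hgt : Psi0 < Psi xs ys := lt_of_le_of_ne hfeas (Ne.symm hne2)
  have hrate : ∀ u : ℝ, 0 < min 1 (exp u) := fun u => lt_min one_pos (exp_pos u)
  have hApos : ∀ x : ℝ, 0 < k0 * S * min 1 (exp (-(x - E1))) := fun x => mul_pos (mul_pos hk0 hS) (hrate _)
  have hBpos : ∀ x : ℝ, 0 < k0 * exp E1 * min 1 (exp (x - E1)) := fun x => mul_pos (mul_pos hk0 (exp_pos E1)) (hrate _)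
  have hCpos : ∀ x y : ℝ, 0 < kcat * min 1 (exp (x - y + dmu + dGc)) := fun x y => mul_pos hkcat (hrate _)
  have hDpos : ∀ x y : ℝ, 0 < kcat * exp dGc * min 1 (exp (y - x - dmu - dGc)) := fun x y => mul_pos (mul_pos hkcat (exp_pos dGc)) (hrate _)
  have hFpos : ∀ y : ℝ, 0 < k1 * exp E2 * min 1 (exp (y - E2)) := fun y => mul_pos (mul_pos hk1 (exp_pos E2)) (hrate _)
  have hGpos : ∀ y : ℝ, 0 < k1 * P * min 1 (exp (-(y - E2))) := fun y => mul_pos (mul_pos hk1 hP) (hrate _)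
  have hSg : ∀ x y : ℝ, 0 < ((k0 * exp E1 * min 1 (exp (x - E1)))*(kcat * exp dGc * min 1 (exp (y - x - dmu - dGc)))+(k0 * exp E1 * min 1 (exp (x - E1)))*(k1 * exp E2 * min 1 (exp (y - E2)))+(kcat * min 1 (exp (x - y + dmu + dGc)))*(k1 * exp E2 * min 1 (exp (y - E2))) + ((k0 * S * min 1 (exp (-(x - E1))))*(kcat * exp dGc * min 1 (exp (y - x - dmu - dGc)))+(k0 * S * min 1 (exp (-(x - E1))))*(k1 * exp E2 * min 1 (exp (y - E2)))+(kcat * exp dGc * min 1 (exp (y - x - dmu - dGc)))*(k1 * P * min 1 (exp (-(y - E2))))) + ((k0 * S * min 1 (exp (-(x - E1))))*(kcat * min 1 (exp (x - y + dmu + dGc)))+(kcat * min 1 (exp (x - y + dmu + dGc)))*(k1 * P * min 1 (exp (-(y - E2))))+(k0 * exp E1 * min 1 (exp (x - E1)))*(k1 * P * min 1 (exp (-(y - E2)))))) := by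
    intro x y
    have h1 := mul_pos (hBpos x) (hDpos x y)
    have h2 := mul_pos (hBpos x) (hFpos y)
    have h3 := mul_pos (hCpos x y) (hFpos y)
    have h4 := mul_pos (hApos x) (hDpos x y)
    have h5 := mul_pos (hApos x) (hFpos y)
    have h6 := mul_pos (hDpos x y) (hGpos y)
    have h7 := mul_pos (hApos x) (hCpos x y)
    have h8 := mul_pos (hCpos x y) (hGpos y)
    have h9 := mul_pos (hBpos x) (hGpos y)
    linarith
  have hsol : ∀ x y : ℝ,
      pE x y = ((k0 * exp E1 * min 1 (exp (x - E1)))*(kcat * exp dGc * min 1 (exp (y - x - dmu - dGc)))+(k0 * exp E1 * min 1 (exp (x - E1)))*(k1 * exp E2 * min 1 (exp (y - E2)))+(kcat * min 1 (exp (x - y + dmu + dGc)))*(k1 * exp E2 * min 1 (exp (y - E2)))) / ((k0 * exp E1 * min 1 (exp (x - E1)))*(kcat * exp dGc * min 1 (exp (y - x - dmu - dGc)))+(k0 * exp E1 * min 1 (exp (x - E1)))*(k1 * exp E2 * min 1 (exp (y - E2)))+(kcat * min 1 (exp (x - y + dmu + dGc)))*(k1 * exp E2 * min 1 (exp (y -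 E2))) + ((k0 * S * min 1 (exp (-(x - E1))))*(kcat * exp dGc * min 1 (exp (y - x - dmu - dGc)))+(k0 * S * min 1 (exp (-(x - E1))))*(k1 * exp E2 * min 1 (exp (y - E2)))+(kcat * exp dGc * min 1 (exp (y - x - dmu - dGc)))*(k1 * P * min 1 (exp (-(y - E2))))) + ((k0 * S * min 1 (exp (-(x - E1))))*(kcat * min 1 (exp (x - y + dmu + dGc)))+(kcat * min 1 (exp (x - y + dmu + dGc)))*(k1 * P * min 1 (exp (-(y - E2))))+(k0 * exp E1 * min 1 (exp (x - E1)))*(k1 * P * min 1 (exp (-(y - E2)))))) ∧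
      pES x y = ((k0 * S * min 1 (exp (-(x - E1))))*(kcat * exp dGc * min 1 (exp (y - x - dmu - dGc)))+(k0 * S * min 1 (exp (-(x - E1))))*(k1 * exp E2 * min 1 (exp (y - E2)))+(kcat * exp dGc * min 1 (exp (y - x - dmu - dGc)))*(k1 * P * min 1 (exp (-(y - E2))))) / ((k0 * exp E1 * min 1 (exp (x - E1)))*(kcat * exp dGc * min 1 (exp (y - x - dmu - dGc)))+(k0 * exp E1 * min 1 (exp (x - E1)))*(k1 * exp E2 * min 1 (exp (y - E2)))+(kcat * min 1 (exp (x - y + dmu + dGc)))*(k1 * exp E2 * min 1 (exp (y - E2))) + ((k0 * S * min 1 (exp (-(x - E1))))*(kcat * exp dGc * min 1 (exp (y - x - dmu - dGc)))+(k0 * S * min 1 (exp (-(x - E1))))*(k1 * exp E2 * min 1 (exp (y - E2)))+(kcat * exp dGc * min 1 (exp (y - x - dmu - dGc)))*(k1 * P * min 1 (exp (-(y - E2))))) + ((k0 * S * min 1 (exp (-(x - E1))))*(kcat * min 1 (exp (x - y + dmu + dGc)))+(kcat * min 1 (exp (x - y + dmu + dGc)))*(k1 * P * min 1 (exp (-(y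 - E2))))+(k0 * exp E1 * min 1 (exp (x - E1)))*(k1 * P * min 1 (exp (-(y - E2)))))) ∧
      pEP x y = ((k0 * S * min 1 (exp (-(x - E1))))*(kcat * min 1 (exp (x - y + dmu + dGc)))+(kcat * min 1 (exp (x - y + dmu + dGc)))*(k1 * P * min 1 (exp (-(y - E2))))+(k0 * exp E1 * min 1 (exp (x - E1)))*(k1 * P * min 1 (exp (-(y - E2))))) / ((k0 * exp E1 * min 1 (exp (x - E1)))*(kcat * exp dGc * min 1 (exp (y - x - dmu - dGc)))+(k0 * exp E1 * min 1 (exp (x - E1)))*(k1 * exp E2 * min 1 (exp (y - E2)))+(kcat * min 1 (exp (x - y + dmu + dGc)))*(k1 * exp E2 * min 1 (exp (y - E2))) + ((k0 * S * min 1 (exp (-(x - E1))))*(kcat * exp dGc * min 1 (exp (y - x - dmu - dGc)))+(k0 * S * min 1 (exp (-(x - E1))))*(k1 * exp E2 * min 1 (exp (y - E2)))+(kcat * exp dGc * min 1 (exp (y - x - dmu - dGc)))*(k1 * P * min 1 (exp (-(y - E2))))) + ((k0 * S * min 1 (exp (-(x - E1))))*(kcat * min 1 (exp (x - y + dmu +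 dGc)))+(kcat * min 1 (exp (x - y + dmu + dGc)))*(k1 * P * min 1 (exp (-(y - E2))))+(k0 * exp E1 * min 1 (exp (x - E1)))*(k1 * P * min 1 (exp (-(y - E2)))))) := by
    intro x y
    obtain ⟨-, -, -, hsum, -, h2, h3⟩ := hstat x y
    exact stat_sol _ _ _ _ _ _ _ _ _ (hApos x) (hBpos x) (hCpos x y) (hDpos x y)
      (hFpos y) (hGpos y) hsum h2 h3
  have hRf : ∀ x y : ℝ, R x y = (((k0 * S * min 1 (exp (-(x - E1))))*(kcat * exp dGc * min 1 (exp (y - x - dmu - dGc)))+(k0 * S * min 1 (exp (-(x - E1))))*(k1 * exp E2 * min 1 (exp (y - E2)))+(kcat * exp dGc * min 1 (exp (y - x - dmu - dGc)))*(k1 * P * min 1 (exp (-(y - E2))))) + ((k0 * S * min 1 (exp (-(x - E1))))*(kcat * min 1 (exp (x - y + dmu + dGc)))+(kcat * min 1 (exp (x - y + dmu + dGc)))*(k1 * P * min 1 (exp (-(y - E2))))+(k0 * exp E1 * min 1 (exp (x - E1)))*(k1 * P * min 1 (exp (-(y - E2)))))) / ((k0 * exp E1 * min 1 (exp (x - E1)))*(kcat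 * exp dGc * min 1 (exp (y - x - dmu - dGc)))+(k0 * exp E1 * min 1 (exp (x - E1)))*(k1 * exp E2 * min 1 (exp (y - E2)))+(kcat * min 1 (exp (x - y + dmu + dGc)))*(k1 * exp E2 * min 1 (exp (y - E2))) + ((k0 * S * min 1 (exp (-(x - E1))))*(kcat * exp dGc * min 1 (exp (y - x - dmu - dGc)))+(k0 * S * min 1 (exp (-(x - E1))))*(k1 * exp E2 * min 1 (exp (y - E2)))+(kcat * exp dGc * min 1 (exp (y - x - dmu - dGc)))*(k1 * P * min 1 (exp (-(y - E2))))) + ((k0 * S * min 1 (exp (-(x - E1))))*(kcat * min 1 (exp (x - y + dmu + dGc)))+(kcat * min 1 (exp (x - y + dmu + dGc)))*(k1 * P * min 1 (exp (-(y - E2))))+(k0 * exp E1 * min 1 (exp (x - E1)))*(k1 * P * min 1 (exp (-(y - E2)))))) := by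
    intro x y
    rw [hR x y, (hsol x y).2.1, (hsol x y).2.2, ← add_div]
  have hPsif : ∀ x y : ℝ, Psi x y =
      ((k0 * S * min 1 (exp (-(x - E1))))*((k0 * exp E1 * min 1 (exp (x - E1)))*(kcat * exp dGc * min 1 (exp (y - x - dmu - dGc)))+(k0 * exp E1 * min 1 (exp (x - E1)))*(k1 * exp E2 * min 1 (exp (y - E2)))+(kcat * min 1 (exp (x - y + dmu + dGc)))*(k1 * exp E2 * min 1 (exp (y - E2)))) - (k0 * exp E1 * min 1 (exp (x - E1)))*((k0 * S * min 1 (exp (-(x - E1))))*(kcat * exp dGc * min 1 (exp (y - x - dmu - dGc)))+(k0 * S * min 1 (exp (-(x - E1))))*(k1 * exp E2 * min 1 (exp (y - E2)))+(kcat * exp dGc * min 1 (exp (y - x - dmu - dGc)))*(k1 * P * min 1 (exp (-(y - E2)))))) / ((k0 * exp E1 * min 1 (exp (x - E1)))*(kcat * exp dGc * min 1 (exp (y - x - dmu - dGc)))+(k0 * exp E1 * min 1 (exp (x - E1)))*(k1 * exp E2 * min 1 (exp (y - E2)))+(kcat * min 1 (exp (x - y + dmu + dGc)))*(k1 * exp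 E2 * min 1 (exp (y - E2))) + ((k0 * S * min 1 (exp (-(x - E1))))*(kcat * exp dGc * min 1 (exp (y - x - dmu - dGc)))+(k0 * S * min 1 (exp (-(x - E1))))*(k1 * exp E2 * min 1 (exp (y - E2)))+(kcat * exp dGc * min 1 (exp (y - x - dmu - dGc)))*(k1 * P * min 1 (exp (-(y - E2))))) + ((k0 * S * min 1 (exp (-(x - E1))))*(kcat * min 1 (exp (x - y + dmu + dGc)))+(kcat * min 1 (exp (x - y + dmu + dGc)))*(k1 * P * min 1 (exp (-(y - E2))))+(k0 * exp E1 * min 1 (exp (x - E1)))*(k1 * P * min 1 (exp (-(y - E2)))))) := by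
    intro x y
    rw [hPsi x y, (hsol x y).1, (hsol x y).2.1, ← mul_div_assoc, ← mul_div_assoc,
      div_sub_div_same]
  -- continuity of the flux along the diagonal
  have hcont : ContinuousAt (fun t : ℝ => Psi (xs + t) (ys + t)) 0 := by
    have heq : (fun t : ℝ => Psi (xs + t) (ys + t)) = fun t : ℝ =>
        ((k0 * S * min 1 (exp (-((xs + t) - E1))))*((k0 * exp E1 * min 1 (exp ((xs + t) - E1)))*(kcat * exp dGc * min 1 (exp ((ys + t) - (xs + t) - dmu - dGc)))+(k0 * exp E1 * min 1 (exp ((xs + t) - E1)))*(k1 * exp E2 * min 1 (exp ((ys + t) - E2)))+(kcat * min 1 (exp ((xs + t) - (ys + t) + dmu + dGc)))*(k1 * exp E2 * min 1 (exp ((ys + t) - E2)))) - (k0 * exp E1 * min 1 (exp ((xs + t) - E1)))*((k0 * S * min 1 (exp (-((xs + t) - E1))))*(kcat * exp dGc * min 1 (exp ((ys + t) - (xs + t) - dmu - dGc)))+(k0 * S * min 1 (exp (-((xs + t) - E1))))*(k1 * exp E2 * min 1 (exp ((ys + t) - E2)))+(kcat * exp dGc * min 1 (exp ((ys + t) - (xs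 + t) - dmu - dGc)))*(k1 * P * min 1 (exp (-((ys + t) - E2)))))) / ((k0 * exp E1 * min 1 (exp ((xs + t) - E1)))*(kcat * exp dGc * min 1 (exp ((ys + t) - (xs + t) - dmu - dGc)))+(k0 * exp E1 * min 1 (exp ((xs + t) - E1)))*(k1 * exp E2 * min 1 (exp ((ys + t) - E2)))+(kcat * min 1 (exp ((xs + t) - (ys + t) + dmu + dGc)))*(k1 * exp E2 * min 1 (exp ((ys + t) - E2))) + ((k0 * S * min 1 (exp (-((xs + t) - E1))))*(kcat * exp dGc * min 1 (exp ((ys + t) - (xs + t) - dmu - dGc)))+(k0 * S * min 1 (exp (-((xs + t) - E1))))*(k1 * exp E2 * min 1 (exp ((ys + t) - E2)))+(kcat * exp dGc * min 1 (exp ((ys + t) - (xs + t) - dmu - dGc)))*(k1 * P * min 1 (exp (-((ys + t) - E2))))) + ((k0 * S * min 1 (exp (-((xs + t) - E1))))*(kcat * min 1 (exp ((xs + t) - (ys + t) + dmu + dGc)))+(kcat * min 1 (exp ((xs + t) - (ys + t) + dmu + dGc)))*(k1 * P * min 1 (exp (-((ys + t) - E2))))+(k0 * exp E1 * min 1 (exp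 ((xs + t) - E1)))*(k1 * P * min 1 (exp (-((ys + t) - E2)))))) :=
      funext fun t => hPsif (xs + t) (ys + t)
    rw [heq]
    exact ContinuousAt.div (by fun_prop) (by fun_prop) (hSg _ _).ne'
  have h00 : Psi0 < (fun t : ℝ => Psi (xs + t) (ys + t)) 0 := by
    simpa using hgt
  have hev : ∀ᶠ t in nhds (0:ℝ), Psi0 < Psi (xs + t) (ys + t) :=
    hcont.eventually (eventually_gt_nhds h00)
  have hev2 : ∀ᶠ t in nhdsWithin (0:ℝ) (Set.Ioi 0), Psi0 < Psi (xs + t) (ys + t) :=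
    hev.filter_mono nhdsWithin_le_nhds
  obtain ⟨t, htpsi, htmem⟩ := (hev2.and self_mem_nhdsWithin).exists
  have ht0 : 0 < t := htmem
  -- shift identities
  have hM2 : max (xs + t - E1) 0 ≤ max (xs - E1) 0 + t :=
    max_le (by linarith [le_max_left (xs - E1) (0:ℝ)]) (by linarith [le_max_right (xs - E1) (0:ℝ)])
  have hM1 : max (xs - E1) 0 ≤ max (xs + t - E1) 0 :=
    max_le_max (by linarith) le_rfl
  have hN2 : max (ys + t - E2) 0 ≤ max (ys - E2) 0 + t :=
    max_le (by linarith [le_max_left (ys - E2) (0:ℝ)]) (by linarith [le_max_right (ys - E2) (0:ℝ)])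
  have hN1 : max (ys - E2) 0 ≤ max (ys + t - E2) 0 :=
    max_le_max (by linarith) le_rfl
  have hr1 : exp (max (xs - E1) 0 - max (xs + t - E1) 0) ≤ 1 := exp_le_one_iff.2 (by linarith)
  have hm1 : exp (max (ys - E2) 0 - max (ys + t - E2) 0) ≤ 1 := exp_le_one_iff.2 (by linarith)
  have hrE : 1 ≤ exp (max (xs - E1) 0 - max (xs + t - E1) 0) * exp t := by
    rw [← Real.exp_add]; exact one_le_exp_iff.2 (by linarith)
  have hmE : 1 ≤ exp (max (ys - E2) 0 - max (ys + t - E2) 0) * exp t := by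
    rw [← Real.exp_add]; exact one_le_exp_iff.2 (by linarith)
  have hE : (1:ℝ) < exp t := by
    rw [show (1:ℝ) = exp 0 from Real.exp_zero.symm]
    exact Real.exp_lt_exp.2 ht0
  have hAt : k0 * S * min 1 (exp (-((xs + t) - E1))) = k0 * S * min 1 (exp (-(xs - E1))) * exp (max (xs - E1) 0 - max (xs + t - E1) 0) := by
    rw [min_exp_neg', min_exp_neg', mul_assoc (k0 * S), ← Real.exp_add,
      show -(max (xs - E1) 0) + (max (xs - E1) 0 - max (xs + t - E1) 0)
        = -(max (xs + t - E1) 0) from by ring]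
  have hBt : k0 * exp E1 * min 1 (exp ((xs + t) - E1)) = k0 * exp E1 * min 1 (exp (xs - E1)) * (exp (max (xs - E1) 0 - max (xs + t - E1) 0) * exp t) := by
    rw [min_exp', min_exp', mul_assoc (k0 * exp E1), ← Real.exp_add, ← Real.exp_add,
      show xs - E1 - max (xs - E1) 0 + (max (xs - E1) 0 - max (xs + t - E1) 0 + t)
        = xs + t - E1 - max (xs + t - E1) 0 from by ring]
  have hCt : kcat * min 1 (exp ((xs + t) - (ys + t) + dmu + dGc)) = kcat * min 1 (exp (xs - ys + dmu + dGc)) := by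
    rw [show xs + t - (ys + t) + dmu + dGc = xs - ys + dmu + dGc from by ring]
  have hDt : kcat * exp dGc * min 1 (exp ((ys + t) - (xs + t) - dmu - dGc)) = kcat * exp dGc * min 1 (exp (ys - xs - dmu - dGc)) := by
    rw [show ys + t - (xs + t) - dmu - dGc = ys - xs - dmu - dGc from by ring]
  have hFt : k1 * exp E2 * min 1 (exp ((ys + t) - E2)) = k1 * exp E2 * min 1 (exp (ys - E2)) * (exp (max (ys - E2) 0 - max (ys + t - E2) 0) * exp t) := by
    rw [min_exp', min_exp', mul_assoc (k1 * exp E2), ← Real.exp_add, ← Real.exp_add,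
      show ys - E2 - max (ys - E2) 0 + (max (ys - E2) 0 - max (ys + t - E2) 0 + t)
        = ys + t - E2 - max (ys + t - E2) 0 from by ring]
  have hGt : k1 * P * min 1 (exp (-((ys + t) - E2))) = k1 * P * min 1 (exp (-(ys - E2))) * exp (max (ys - E2) 0 - max (ys + t - E2) 0) := by
    rw [min_exp_neg', min_exp_neg', mul_assoc (k1 * P), ← Real.exp_add,
      show -(max (ys - E2) 0) + (max (ys - E2) 0 - max (ys + t - E2) 0)
        = -(max (ys + t - E2) 0) from by ring]
  have hRlt : R (xs + t) (ys + t) < R xs ys := by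
    rw [hRf (xs + t) (ys + t), hRf xs ys, div_lt_div_iff₀ (hSg _ _) (hSg _ _),
      hAt, hBt, hCt, hDt, hFt, hGt]
    exact key_ineq2 (k0 * S * min 1 (exp (-(xs - E1)))) (k0 * exp E1 * min 1 (exp (xs - E1))) (kcat * min 1 (exp (xs - ys + dmu + dGc))) (kcat * exp dGc * min 1 (exp (ys - xs - dmu - dGc)))
      (k1 * exp E2 * min 1 (exp (ys - E2))) (k1 * P * min 1 (exp (-(ys - E2)))) (exp (max (xs - E1) 0 - max (xs + t - E1) 0))
      (exp (max (ys - E2) 0 - max (ys + t - E2) 0)) (exp t)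
      (hApos xs) (hBpos xs) (hCpos xs ys) (hDpos xs ys) (hFpos ys) (hGpos ys)
      hE hr1 hm1 hrE hmE
  have := hmin (xs + t) (ys + t) htpsi.le
  linarith
end
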